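/- Let G be a finite group. Then Σ_{x,y∈G} [x,y] = Σ_K (|G|/|K|) (K°)⁺ K⁺ in the group algebra ℂG, where the sum runs over conjugacy classes K of G and K° denotes the conjugacy class consisting of the inverses of elements of K. -/
import Mathlib


open scoped Classical

noncomputable section Defs

/-- `χ` is the character of some finite-dimensional complex representation of `G`. -/
def IsChar (G : Type*) [Group G] [Fintype G] (χ : G → ℂ) : Prop :=
  ∃ (n : ℕ) (ρ : Representation ℂ G (Fin n → ℂ)),
    ∀ g : G, χ g = LinearMap.trace ℂ (Fin n → ℂ) (ρ g)

/-- `χ` is an irreducible character of `G` (a character of norm one). -/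
def IsIrrChar (G : Type*) [Group G] [Fintype G] (χ : G → ℂ) : Prop :=
  IsChar G χ ∧ ∑ g : G, χ g * (starRingEnd ℂ) (χ g) = (Fintype.card G : ℂ)

/-- `χ` is a real-valued class function. -/
def IsRealChar (G : Type*) (χ : G → ℂ) : Prop :=
  ∀ g : G, (starRingEnd ℂ) (χ g) = χ g

variable {G : Type*} [Group G] [Fintype G]

/-- extension of a function on a subgroup by zero. -/
def ext0 (H : Subgroup G) (θ : ↥H → ℂ) (g : G) : ℂ :=
  if h : g ∈ H then θ ⟨g, h⟩ else 0

/-- the character of `G` induced from the character `θ` of the subgroup `H`. -/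
def Ind (H : Subgroup G) (θ : ↥H → ℂ) (g : G) : ℂ :=
  (∑ x : G, ext0 H θ (x * g * x⁻¹)) / (Nat.card H : ℂ)

/-- the character of an intermediate subgroup `K` (with `H ≤ K`) induced from `θ` on `H`. -/
def IndTo (H K : Subgroup G) (θ : ↥H → ℂ) (k : ↥K) : ℂ :=
  (∑ x : ↥K, ext0 H θ (↑x * ↑k * (↑x)⁻¹)) / (Nat.card H : ℂ)

/-- the usual inner product of class functions on `H`. -/
def innerChar (H : Subgroup G) (φ ψ : ↥H → ℂ) : ℂ :=
  (∑ h : ↥H, φ h * (starRingEnd ℂ) (ψ h)) / (Nat.card H : ℂ)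

/-- the conjugate character `θ^g : n ↦ θ (g n g⁻¹)`. -/
def conjChar (H : Subgroup G) (θ : ↥H → ℂ) (g : G) : ↥H → ℂ :=
  fun n => ext0 H θ (g * ↑n * g⁻¹)

/-- the Frobenius–Schur indicator. -/
def FSind (H : Type*) [Group H] [Fintype H] (χ : H → ℂ) : ℂ :=
  (∑ h : H, χ (h ^ 2)) / (Fintype.card H : ℂ)

/-- the Gow indicator `ε_t(θ) = (1/|N|) ∑_{n ∈ N} θ((nt)²)`. -/
def Gow (H : Subgroup G) (θ : ↥H → ℂ) (t : G) : ℂ :=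
  (∑ n : ↥H, ext0 H θ ((↑n * t) ^ 2)) / (Nat.card H : ℂ)

end Defs

section Aux
variable {G : Type*} [Group G] [Fintype G]

lemma img_eq (x : G) : Finset.univ.image (fun y : G => y⁻¹ * x * y)
    = (ConjClasses.mk x).carrier.toFinset := by
  ext b
  simp only [Finset.mem_image, Finset.mem_univ, true_and, Set.mem_toFinset,
    ConjClasses.mem_carrier_iff_mk_eq, ConjClasses.mk_eq_mk_iff_isConj, isConj_iff]
  constructor
  · rintro ⟨y, rfl⟩; exact ⟨y, by group⟩
  · rintro ⟨c, rfl⟩; exact ⟨c, by group⟩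

lemma fib_card (x b : G) (hb : b ∈ (ConjClasses.mk x).carrier.toFinset) :
    (Finset.univ.filter (fun y : G => y⁻¹ * x * y = b)).card
      = (Finset.univ.filter (fun y : G => y⁻¹ * x * y = x)).card := by
  rw [Set.mem_toFinset, ConjClasses.mem_carrier_iff_mk_eq,
    ConjClasses.mk_eq_mk_iff_isConj, isConj_iff] at hb
  obtain ⟨z, hz⟩ := hb
  apply Finset.card_bij' (fun y _ => y * z⁻¹) (fun w _ => w * z)
  · intro y hy
    simp only [Finset.mem_filter, Finset.mem_univ, true_and] at hy ⊢
    have h1 : (y * z⁻¹)⁻¹ * x * (y * z⁻¹) = z * (y⁻¹ * x * y) * z⁻¹ := by group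
    rw [h1, hy, hz]
  · intro w hw
    simp only [Finset.mem_filter, Finset.mem_univ, true_and] at hw ⊢
    have h1 : (w * z)⁻¹ * x * (w * z) = z⁻¹ * (w⁻¹ * x * w) * z := by group
    rw [h1, hw, ← hz]; group
  · intro y _; group
  · intro w _; group

lemma innerSum4 (x : G) :
    ∑ y : G, (MonoidAlgebra.single (x⁻¹ * y⁻¹ * x * y) (1 : ℂ) : MonoidAlgebra ℂ G)
      = ((Fintype.card G : ℂ) / ((ConjClasses.mk x).carrier.toFinset.card : ℂ)) •
        ∑ b ∈ (ConjClasses.mk x).carrier.toFinset,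
          (MonoidAlgebra.single (x⁻¹ * b) (1 : ℂ) : MonoidAlgebra ℂ G) := by
  set K := (ConjClasses.mk x).carrier.toFinset with hK
  set N := (Finset.univ.filter (fun y : G => y⁻¹ * x * y = x)).card with hN
  have hcard : Fintype.card G = K.card * N := by
    have := Finset.card_eq_sum_card_image (fun y : G => y⁻¹ * x * y) Finset.univ
    rw [img_eq x, ← hK] at this
    rw [← Finset.card_univ, this, Finset.sum_congr rfl (fun b hb => fib_card x b hb),
      Finset.sum_const, smul_eq_mul]
  have hKne : (K.card : ℂ) ≠ 0 := by
    have : x ∈ K := by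
      simp [hK, ConjClasses.mem_carrier_iff_mk_eq]
    have := Finset.card_pos.2 ⟨x, this⟩
    exact_mod_cast this.ne'
  have hscal : ((Fintype.card G : ℂ) / (K.card : ℂ)) = (N : ℂ) := by
    rw [div_eq_iff hKne, hcard]; push_cast; ring
  calc ∑ y : G, (MonoidAlgebra.single (x⁻¹ * y⁻¹ * x * y) (1 : ℂ) : MonoidAlgebra ℂ G)
      = ∑ y : G, (MonoidAlgebra.single (x⁻¹ * (y⁻¹ * x * y)) (1 : ℂ) : MonoidAlgebra ℂ G) := by
        simp_rw [mul_assoc]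
    _ = ∑ b ∈ Finset.univ.image (fun y : G => y⁻¹ * x * y),
          (Finset.univ.filter (fun y : G => y⁻¹ * x * y = b)).card •
            (MonoidAlgebra.single (x⁻¹ * b) (1 : ℂ) : MonoidAlgebra ℂ G) :=
        Finset.sum_comp (fun b => (MonoidAlgebra.single (x⁻¹ * b) (1 : ℂ) : MonoidAlgebra ℂ G))
          (fun y : G => y⁻¹ * x * y)
    _ = ∑ b ∈ K, N • (MonoidAlgebra.single (x⁻¹ * b) (1 : ℂ) : MonoidAlgebra ℂ G) := by
        rw [img_eq x, ← hK]
        exact Finset.sum_congr rfl (fun b hb => by rw [fib_card x b hb])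
    _ = ((Fintype.card G : ℂ) / (K.card : ℂ)) •
          ∑ b ∈ K, (MonoidAlgebra.single (x⁻¹ * b) (1 : ℂ) : MonoidAlgebra ℂ G) := by
        rw [hscal, Finset.smul_sum]
        exact Finset.sum_congr rfl (fun b _ => (Nat.cast_smul_eq_nsmul ℂ N _).symm)

end Aux

/-- `∑_{x,y} [x,y] = ∑_K (|G|/|K|) (K°)⁺ K⁺` in `ℂG`. -/
theorem stmt4 {G : Type*} [Group G] [Fintype G] :
    ∑ x : G, ∑ y : G, (MonoidAlgebra.single (x⁻¹ * y⁻¹ * x * y) (1 : ℂ) : MonoidAlgebra ℂ G) =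
      ∑ c : ConjClasses G,
        ((Fintype.card G : ℂ) / (c.carrier.toFinset.card : ℂ)) •
          ((∑ k ∈ c.carrier.toFinset, (MonoidAlgebra.single k⁻¹ (1 : ℂ) : MonoidAlgebra ℂ G)) *
            ∑ k ∈ c.carrier.toFinset, (MonoidAlgebra.single k (1 : ℂ) : MonoidAlgebra ℂ G)) := by
  have hfib := Finset.sum_fiberwise Finset.univ (ConjClasses.mk : G → ConjClasses G)
    (fun x => ∑ y : G, (MonoidAlgebra.single (x⁻¹ * y⁻¹ * x * y) (1 : ℂ) : MonoidAlgebra ℂ G))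
  rw [← hfib]
  refine Finset.sum_congr rfl (fun c _ => ?_)
  have hfil : Finset.univ.filter (fun x : G => ConjClasses.mk x = c) = c.carrier.toFinset := by
    ext x; simp [ConjClasses.mem_carrier_iff_mk_eq]
  rw [hfil]
  rw [Finset.sum_mul_sum]
  simp_rw [MonoidAlgebra.single_mul_single, one_mul]
  rw [Finset.smul_sum]
  refine Finset.sum_congr rfl (fun x hx => ?_)
  have hmk : ConjClasses.mk x = c := by
    rwa [← ConjClasses.mem_carrier_iff_mk_eq, ← Set.mem_toFinset]
  rw [innerSum4 x, hmk, Finset.smul_sum]
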